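/- The tensor inner product ⟨A, B⟩ = Σ_{i,j,k} A_{ijk} B_{ijk} of two real third-order tensors A, B ∈ ℝ^{n₁×n₂×n₃} equals Trace(A ⋆ Bᵀ) and also equals Trace(Aᵀ ⋆ B). -/

import Mathlib

open Matrix Complex Finset Kronecker

abbrev Tensor (n₁ n₂ n₃ : ℕ) := Fin n₃ → Matrix (Fin n₁) (Fin n₂) ℝ

/-- The DFT along the third (tube) mode: the `i`-th Fourier frontal slice `Â⁽ⁱ⁾`. -/
noncomputable def dftSlice {n₁ n₂ n₃ : ℕ} (A : Tensor n₁ n₂ n₃) (i : Fin n₃) :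
    Matrix (Fin n₁) (Fin n₂) ℂ :=
  ∑ k : Fin n₃,
    Complex.exp (-2 * Real.pi * Complex.I * ((i : ℕ) : ℂ) * ((k : ℕ) : ℂ) / (n₃ : ℂ)) •
      (A k).map Complex.ofReal

/-- The t-product `A ⋆ B = fold (bcirc A · unfold B)`, i.e. circular convolution of
frontal slices. -/
noncomputable def tProd {n₁ q n₂ n₃ : ℕ} (A : Tensor n₁ q n₃) (B : Tensor q n₂ n₃) :
    Tensor n₁ n₂ n₃ :=
  fun k => ∑ m : Fin n₃, A m * B (k - m)

/-- Tensor transpose: transpose each frontal slice and reverse the order of slices 2..n₃. -/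
def tTranspose {n₁ n₂ n₃ : ℕ} (A : Tensor n₁ n₂ n₃) : Tensor n₂ n₁ n₃ :=
  fun k => (A (-k)).transpose

/-- Identity tensor: first frontal slice is the identity matrix, the rest are zero. -/
def tId (n n₃ : ℕ) [NeZero n₃] : Tensor n n n₃ := fun k => if k = 0 then 1 else 0

/-- Tensor trace `(1/n₃) Σᵢ trace Â⁽ⁱ⁾` (complex-valued form). -/
noncomputable def tTraceC {n n₃ : ℕ} (A : Tensor n n n₃) : ℂ :=
  (n₃ : ℂ)⁻¹ * ∑ i : Fin n₃, (dftSlice A i).trace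

/-- Tensor trace (real value). -/
noncomputable def tTraceR {n n₃ : ℕ} (A : Tensor n n n₃) : ℝ := (tTraceC A).re

/-- Squared Frobenius norm of a third-order tensor. -/
def frobSq {n₁ n₂ n₃ : ℕ} (A : Tensor n₁ n₂ n₃) : ℝ :=
  ∑ k : Fin n₃, ∑ p, ∑ q, (A k p q) ^ 2


/-- Tensor inner product `⟨A,B⟩ = Σ_{i,j,k} A_{ijk} B_{ijk}`. -/
def tInner {n₁ n₂ n₃ : ℕ} (A B : Tensor n₁ n₂ n₃) : ℝ :=
  ∑ k : Fin n₃, ∑ p, ∑ q, A k p q * B k p q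


lemma sum_exp_fin {n₃ : ℕ} [NeZero n₃] (k : Fin n₃) :
    (∑ i : Fin n₃, Complex.exp (-2 * Real.pi * Complex.I * ((i : ℕ) : ℂ) * ((k : ℕ) : ℂ) / (n₃ : ℂ)))
      = if k = 0 then (n₃ : ℂ) else 0 := by
  have hn : (n₃ : ℂ) ≠ 0 := Nat.cast_ne_zero.mpr (NeZero.ne n₃)
  by_cases hk : k = 0
  · simp [hk]
  · set ζ : ℂ := Complex.exp (-2 * Real.pi * Complex.I * ((k : ℕ) : ℂ) / (n₃ : ℂ)) with hζ
    have hterm : ∀ i : Fin n₃,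
        Complex.exp (-2 * Real.pi * Complex.I * ((i : ℕ) : ℂ) * ((k : ℕ) : ℂ) / (n₃ : ℂ))
          = ζ ^ (i : ℕ) := by
      intro i
      rw [hζ, ← Complex.exp_nat_mul]
      ring_nf
    have hzn : ζ ^ n₃ = 1 := by
      rw [hζ, ← Complex.exp_nat_mul]
      have : (n₃ : ℂ) * (-2 * Real.pi * Complex.I * ((k : ℕ) : ℂ) / (n₃ : ℂ))
          = ((-(k : ℤ) : ℤ) : ℂ) * (2 * Real.pi * Complex.I) := by
        field_simp
        push_cast
        ring
      rw [this, Complex.exp_int_mul_two_pi_mul_I]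
    have hz1 : ζ ≠ 1 := by
      intro h1
      rw [hζ, Complex.exp_eq_one_iff] at h1
      obtain ⟨m, hm⟩ := h1
      have hπ : (2 * (Real.pi : ℂ) * Complex.I) ≠ 0 := by
        simp [Real.pi_ne_zero, Complex.I_ne_zero]
      rw [div_eq_iff hn] at hm
      have h2 : (2 * (Real.pi : ℂ) * Complex.I) * ((k : ℕ) : ℂ)
          = (2 * (Real.pi : ℂ) * Complex.I) * ((-m * n₃ : ℤ) : ℂ) := by
        push_cast
        linear_combination -hm
      have hk' : ((k : ℕ) : ℂ) = ((-m * n₃ : ℤ) : ℂ) := mul_left_cancel₀ hπ h2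
      have hkz : ((k : ℕ) : ℤ) = -m * n₃ := by exact_mod_cast hk'
      have hdvd : (n₃ : ℕ) ∣ (k : ℕ) := by
        have : (n₃ : ℤ) ∣ ((k : ℕ) : ℤ) := ⟨-m, by linarith [hkz]⟩
        exact_mod_cast this
      have := Nat.eq_zero_of_dvd_of_lt hdvd k.isLt
      exact hk (Fin.ext this)
    simp only [hterm, hk, if_false]
    rw [Fin.sum_univ_eq_sum_range (fun i => ζ ^ i), geom_sum_eq hz1, hzn]
    simp

lemma tTraceC_eq_trace_zero {n n₃ : ℕ} [NeZero n₃] (X : Tensor n n n₃) :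
    tTraceC X = (((X 0).trace : ℝ) : ℂ) := by
  have hn : (n₃ : ℂ) ≠ 0 := Nat.cast_ne_zero.mpr (NeZero.ne n₃)
  have hmap : ∀ k, ((X k).map Complex.ofReal).trace = (((X k).trace : ℝ) : ℂ) := by
    intro k; simp [Matrix.trace, Matrix.diag, Matrix.map_apply]
  unfold tTraceC dftSlice
  simp only [Matrix.trace_sum, Matrix.trace_smul, smul_eq_mul, hmap]
  rw [Finset.sum_comm]
  simp only [← Finset.sum_mul, sum_exp_fin, ite_mul, zero_mul]
  rw [Finset.sum_ite_eq' Finset.univ (0 : Fin n₃)]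
  simp [hn]

/-- `⟨A,B⟩ = Trace (A ⋆ Bᵀ) = Trace (Aᵀ ⋆ B)`. -/
theorem tInner_eq_tTrace {n₁ n₂ n₃ : ℕ} (A B : Tensor n₁ n₂ n₃) :
    ((tInner A B : ℝ) : ℂ) = tTraceC (tProd A (tTranspose B)) ∧
      ((tInner A B : ℝ) : ℂ) = tTraceC (tProd (tTranspose A) B) := by
  rcases Nat.eq_zero_or_pos n₃ with h | h
  · subst h
    simp [tInner, tTraceC]
  · haveI : NeZero n₃ := ⟨h.ne'⟩
    constructor
    · rw [tTraceC_eq_trace_zero]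
      norm_cast
      simp only [tInner, tProd, tTranspose, Matrix.trace_sum, zero_sub, neg_neg]
      refine Finset.sum_congr rfl fun k _ => ?_
      simp [Matrix.trace, Matrix.diag, Matrix.mul_apply, Matrix.transpose_apply]
    · rw [tTraceC_eq_trace_zero]
      norm_cast
      simp only [tInner, tProd, tTranspose, Matrix.trace_sum, zero_sub, neg_neg]
      rw [show (∑ i : Fin n₃, ((A (-i)).transpose * B (-i)).trace)
            = ∑ m : Fin n₃, ((A m).transpose * B m).trace from
          Fintype.sum_equiv (Equiv.neg (Fin n₃)) _ _ (fun m => by simp)]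
      refine Finset.sum_congr rfl fun k _ => ?_
      rw [Finset.sum_comm]
      simp [Matrix.trace, Matrix.diag, Matrix.mul_apply, Matrix.transpose_apply]
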